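/- The restriction functor from the category of sheaves of sets on compact Hausdorff spaces (functors F : CompHaus^op → Set such that for every continuous surjection f : Y → X, F(X) → F(Y) ⇉ F(Y ×_X Y) is an equalizer) to the category of presheaves of sets on the full subcategory of Stone–Čech compactifications of discrete spaces (β-sets) is an equivalence of categories. -/

import Mathlib

open CategoryTheory Limits Opposite

universe u

attribute [local instance] ConcreteCategory.instFunLike

/-- The category of β-sets: the full subcategory of compact Hausdorff spaces consisting of
Stone–Čech compactifications of discrete spaces. -/
abbrev BSetProp : CompHaus.{u} → Prop := fun X => ∃ S : Type u, Nonempty (X ≃ₜ Ultrafilter S)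

abbrev BSet := ObjectProperty.FullSubcategory BSetProp.{u}

/-- The sheaf condition `(⋆)`: for every continuous surjection `f : Y → X` of compact
Hausdorff spaces, `F(X) → F(Y) ⇉ F(Y ×_X Y)` is an equalizer. -/
def DescentCond (F : CompHaus.{u}ᵒᵖ ⥤ Type u) : Prop :=
  ∀ (X Y : CompHaus.{u}) (f : Y ⟶ X), Function.Surjective f →
    Function.Injective (F.map f.op) ∧
    ∀ y : F.obj (op Y),
      (F.map (pullback.fst f f).op y = F.map (pullback.snd f f).op y
        ↔ ∃ x, F.map f.op x = y)

/-- The restriction functor from sheaves on compact Hausdorff spaces to presheaves on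
β-sets, given by restricting along the (opposite of the) full inclusion `BSet ⥤ CompHaus`. -/
noncomputable def res :
    ObjectProperty.FullSubcategory DescentCond.{u} ⥤ (BSet.{u}ᵒᵖ ⥤ Type u) :=
  ObjectProperty.ι DescentCond.{u} ⋙
    (Functor.whiskeringLeft BSet.{u}ᵒᵖ CompHaus.{u}ᵒᵖ (Type u)).obj (ObjectProperty.ι BSetProp.{u}).op

noncomputable section
namespace Stmt14
abbrev bC (X : CompHaus.{u}) : CompHaus.{u} := CompHaus.of (Ultrafilter X)
def eps (X : CompHaus.{u}) : bC X ⟶ X :=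
  ConcreteCategory.ofHom ⟨Ultrafilter.extend id, continuous_ultrafilter_extend id⟩
@[simp] lemma eps_pure {X : CompHaus.{u}} (x : X) : eps X (pure x) = x :=
  congr_fun (ultrafilter_extend_extends (id : X → X)) x
lemma eps_surjective (X : CompHaus.{u}) : Function.Surjective (eps X) :=
  fun x => ⟨pure x, eps_pure x⟩
lemma bext {S : Type u} {Y : CompHaus.{u}} {f g : CompHaus.of (Ultrafilter S) ⟶ Y}
    (h : ∀ x : S, f (pure x) = g (pure x)) : f = g := by
  have : (f : Ultrafilter S → Y) = g :=
    denseRange_pure.equalizer (ConcreteCategory.hom f).continuous (ConcreteCategory.hom g).continuous (funext h)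
  exact ConcreteCategory.hom_ext _ _ fun x => congr_fun this x
def bMap {X Y : CompHaus.{u}} (f : X → Y) : bC X ⟶ bC Y :=
  ConcreteCategory.ofHom ⟨Ultrafilter.extend (pure ∘ f), continuous_ultrafilter_extend _⟩
@[simp] lemma bMap_pure {X Y : CompHaus.{u}} (f : X → Y) (x : X) :
    bMap f (pure x) = pure (f x) :=
  congr_fun (ultrafilter_extend_extends (pure ∘ f)) x
lemma bMap_eps {X Y : CompHaus.{u}} (f : X ⟶ Y) : bMap f ≫ eps Y = eps X ≫ f :=
  bext fun x => by rw [CategoryTheory.comp_apply, CategoryTheory.comp_apply, bMap_pure, eps_pure, eps_pure]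
@[simp] lemma bMap_id (X : CompHaus.{u}) : bMap (fun x : X => x) = 𝟙 (bC X) :=
  bext fun x => by rw [CategoryTheory.id_apply, bMap_pure]
lemma bMap_comp {X Y Z : CompHaus.{u}} (f : X → Y) (g : Y → Z) :
    bMap (g ∘ f) = bMap f ≫ bMap g :=
  bext fun x => by rw [CategoryTheory.comp_apply, bMap_pure, bMap_pure, bMap_pure]; rfl
abbrev bObj (X : CompHaus.{u}) : BSet.{u} := ⟨bC X, ⟨X, ⟨Homeomorph.refl _⟩⟩⟩
instance bset_projective (T : BSet.{u}) : Projective T.obj := by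
  obtain ⟨S, ⟨e⟩⟩ := T.property
  exact Projective.of_iso (CompHausLike.isoOfHomeo
    (X := CompHaus.of (Ultrafilter S)) (Y := T.obj) e.symm)
    (CompHaus.projective_ultrafilter S)
lemma exists_lift {T : BSet.{u}} {Z Z' : CompHaus.{u}} (g : Z ⟶ Z')
    (hg : Function.Surjective g) (c : T.obj ⟶ Z') : ∃ d : T.obj ⟶ Z, d ≫ g = c := by
  haveI : Epi g := (CompHaus.epi_iff_surjective g).mpr hg
  exact ⟨Projective.factorThru c g, Projective.factorThru_comp c g⟩

abbrev toC {T T' : BSet.{u}} (f : T ⟶ T') : T.obj ⟶ T'.obj := f.hom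
abbrev ofC {T T' : BSet.{u}} (f : T.obj ⟶ T'.obj) : T ⟶ T' := ObjectProperty.homMk f

-- the double-cover used in the equalizer formula
abbrev W (X : CompHaus.{u}) : CompHaus.{u} := pullback (eps X) (eps X)

/-- `B` of a (set-theoretic) map, as a morphism of β-sets. -/
abbrev bHom {X Y : CompHaus.{u}} (f : X → Y) : bObj X ⟶ bObj Y := ofC (bMap f)

/-- structure maps `B(W X) ⟶ B X` (as morphisms of β-sets) -/
def q₁ (X : CompHaus.{u}) : bObj (W X) ⟶ bObj X :=
  ofC (eps (W X) ≫ pullback.fst (eps X) (eps X))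
def q₂ (X : CompHaus.{u}) : bObj (W X) ⟶ bObj X :=
  ofC (eps (W X) ≫ pullback.snd (eps X) (eps X))

lemma q_eps (X : CompHaus.{u}) :
    toC (q₁ X) ≫ eps X = toC (q₂ X) ≫ eps X := by
  simp only [q₁, q₂, ofC, toC, ObjectProperty.homMk_hom, Category.assoc, pullback.condition]

variable (P : BSet.{u}ᵒᵖ ⥤ Type u)

/-- the equalizer defining the extension -/
def Cond {X : CompHaus.{u}} (x : P.obj (op (bObj X))) : Prop :=
  P.map (q₁ X).op x = P.map (q₂ X).op x

lemma map_map {T T' T'' : BSet.{u}} (f : T ⟶ T') (g : T' ⟶ T'') (x : P.obj (op T'')) :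
    P.map f.op (P.map g.op x) = P.map (f ≫ g).op x := by
  rw [op_comp, FunctorToTypes.map_comp_apply]

/-- Key lemma, step 1: an equalized section is insensitive to the choice of map over `X`. -/
lemma step1 {Y : CompHaus.{u}} {y : P.obj (op (bObj Y))} (hy : Cond P y)
    {T : BSet.{u}} (a b : T ⟶ bObj Y)
    (h : toC a ≫ eps Y = toC b ≫ eps Y) :
    P.map a.op y = P.map b.op y := by
  obtain ⟨d, hd⟩ := exists_lift (T := T) (eps (W Y)) (eps_surjective _)
    (pullback.lift (toC a) (toC b) h)
  have h1 : ofC d ≫ q₁ Y = a := by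
    apply InducedCategory.hom_ext
    show d ≫ (eps (W Y) ≫ pullback.fst (eps Y) (eps Y)) = toC a
    rw [← Category.assoc, hd, pullback.lift_fst]
  have h2 : ofC d ≫ q₂ Y = b := by
    apply InducedCategory.hom_ext
    show d ≫ (eps (W Y) ≫ pullback.snd (eps Y) (eps Y)) = toC b
    rw [← Category.assoc, hd, pullback.lift_snd]
  have := congrArg (P.map (ofC d).op) hy
  rwa [map_map, map_map, h1, h2] at this

/-- Key lemma, step 2: with a descent datum along a surjection `f : Y ⟶ X`, an equalized
section is insensitive to the choice of map over `X`. -/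
lemma step2 {X Y : CompHaus.{u}} (f : Y ⟶ X) {y : P.obj (op (bObj Y))} (hy : Cond P y)
    (hdes : P.map (bHom (pullback.fst f f)).op y
      = P.map (bHom (pullback.snd f f)).op y)
    {T : BSet.{u}} (a b : T ⟶ bObj Y)
    (h : toC a ≫ eps Y ≫ f = toC b ≫ eps Y ≫ f) :
    P.map a.op y = P.map b.op y := by
  set V := pullback f f
  set c : T.obj ⟶ V := pullback.lift (toC a ≫ eps Y) (toC b ≫ eps Y) (by
    simpa only [Category.assoc] using h)
  obtain ⟨d, hd⟩ := exists_lift (T := T) (eps V) (eps_surjective _) c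
  have key : ∀ (pr : V ⟶ Y) (e : T ⟶ bObj Y), toC e ≫ eps Y = c ≫ pr →
      P.map (ofC d ≫ bHom pr).op y = P.map e.op y := by
    intro pr e he
    apply step1 P hy
    show (d ≫ bMap pr) ≫ eps Y = toC e ≫ eps Y
    rw [Category.assoc, bMap_eps, ← Category.assoc, hd, he]
  have h1 := key (pullback.fst f f) a (by rw [pullback.lift_fst])
  have h2 := key (pullback.snd f f) b (by rw [pullback.lift_snd])
  have := congrArg (P.map (ofC d).op) hdes
  rw [map_map, map_map] at this
  rw [← h1, ← h2, this]

lemma bHom_id (X : CompHaus.{u}) : bHom (⇑(𝟙 X)) = 𝟙 (bObj X) :=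
  InducedCategory.hom_ext <| bext fun x => by
    show bMap ⇑(𝟙 X) (pure x) = pure x
    rw [bMap_pure]; rfl

lemma bHom_comp {X Y Z : CompHaus.{u}} (f : X ⟶ Y) (g : Y ⟶ Z) :
    bHom (⇑(f ≫ g)) = bHom ⇑f ≫ bHom ⇑g :=
  InducedCategory.hom_ext <| bext fun x => by
    show bMap ⇑(f ≫ g) (pure x) = bMap ⇑g (bMap ⇑f (pure x))
    rw [bMap_pure, bMap_pure, bMap_pure]; rfl

lemma cond_map {X Y : CompHaus.{u}} (f : X ⟶ Y) {y : P.obj (op (bObj Y))} (hy : Cond P y) :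
    Cond P (P.map (bHom ⇑f).op y) := by
  unfold Cond
  rw [map_map, map_map]
  apply step1 P hy
  show (toC (q₁ X) ≫ bMap ⇑f) ≫ eps Y = (toC (q₂ X) ≫ bMap ⇑f) ≫ eps Y
  rw [Category.assoc, Category.assoc, bMap_eps, ← Category.assoc, ← Category.assoc, q_eps]

/-- The extension of a presheaf on β-sets to all of `CompHaus`, via the equalizer formula. -/
def extF : CompHaus.{u}ᵒᵖ ⥤ Type u where
  obj Xop := {x : P.obj (op (bObj (unop Xop))) // Cond P x}
  map {Xop Yop} f := TypeCat.ofHom fun x => ⟨P.map (bHom ⇑(f.unop)).op x.1, cond_map P f.unop x.2⟩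
  map_id Xop := ConcreteCategory.hom_ext _ _ fun x => Subtype.ext (by
    show P.map (bHom ⇑(𝟙 (unop Xop))).op x.1 = x.1
    rw [bHom_id]
    simp)
  map_comp {Xop Yop Zop} f g := ConcreteCategory.hom_ext _ _ fun x => Subtype.ext (by
    show P.map (bHom ⇑(g.unop ≫ f.unop)).op x.1
      = P.map (bHom ⇑(g.unop)).op (P.map (bHom ⇑(f.unop)).op x.1)
    rw [map_map, bHom_comp])

variable {X Y : CompHaus.{u}} (f : Y ⟶ X) (hf : Function.Surjective f)

/-- a set-theoretic section of `f`, as a map of β-sets -/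
def sec : bObj X ⟶ bObj Y := bHom (Function.surjInv hf)

lemma sec_comp : sec f hf ≫ bHom ⇑f = 𝟙 (bObj X) :=
  InducedCategory.hom_ext <| bext fun x => by
    show bMap ⇑f (bMap (Function.surjInv hf) (pure x)) = pure x
    rw [bMap_pure, bMap_pure, Function.surjInv_eq hf]

lemma sec_eps : toC (sec f hf) ≫ eps Y ≫ f = eps X :=
  bext fun x => by
    show f (eps Y (bMap (Function.surjInv hf) (pure x))) = eps X (pure x)
    rw [bMap_pure, eps_pure, eps_pure, Function.surjInv_eq hf]

lemma extF_descent : DescentCond (extF P) := by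
  intro X Y f hf
  constructor
  · intro u v h
    have h1 : P.map (bHom ⇑f).op u.1 = P.map (bHom ⇑f).op v.1 := congrArg Subtype.val h
    have h2 := congrArg (P.map (sec f hf).op) h1
    rw [map_map, map_map, sec_comp] at h2
    rw [op_id] at h2
    simp only [FunctorToTypes.map_id_apply] at h2
    exact Subtype.ext h2
  · intro y
    constructor
    · intro hy
      have hdes : P.map (bHom ⇑(pullback.fst f f)).op y.1
          = P.map (bHom ⇑(pullback.snd f f)).op y.1 := congrArg Subtype.val hy
      refine ⟨⟨P.map (sec f hf).op y.1, ?_⟩, ?_⟩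
      · unfold Cond
        rw [map_map, map_map]
        apply step2 P f y.2 hdes
        show (toC (q₁ X) ≫ toC (sec f hf)) ≫ eps Y ≫ f
          = (toC (q₂ X) ≫ toC (sec f hf)) ≫ eps Y ≫ f
        rw [Category.assoc, Category.assoc, sec_eps, q_eps]
      · apply Subtype.ext
        show P.map (bHom ⇑f).op (P.map (sec f hf).op y.1) = y.1
        rw [map_map]
        have := step2 P f y.2 hdes (a := bHom ⇑f ≫ sec f hf) (b := 𝟙 (bObj Y)) (by
          show (bMap ⇑f ≫ toC (sec f hf)) ≫ eps Y ≫ f = toC (𝟙 (bObj Y)) ≫ eps Y ≫ f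
          rw [Category.assoc, sec_eps, bMap_eps,
            show toC (𝟙 (bObj Y)) = 𝟙 (bC Y) from rfl, Category.id_comp])
        rw [this, op_id]
        simp only [FunctorToTypes.map_id_apply]
    · rintro ⟨x, rfl⟩
      rw [← FunctorToTypes.map_comp_apply, ← FunctorToTypes.map_comp_apply,
        ← op_comp, ← op_comp, pullback.condition]

/-- `eps` as a morphism of β-sets. -/
abbrev epsB (T : BSet.{u}) : bObj T.obj ⟶ T := ofC (eps T.obj)

/-- a section of `eps` on a β-set, by projectivity -/
def secB (T : BSet.{u}) : T ⟶ bObj T.obj :=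
  ObjectProperty.homMk (exists_lift (eps T.obj) (eps_surjective _) (𝟙 T.obj)).choose

lemma secB_comp (T : BSet.{u}) : secB T ≫ epsB T = 𝟙 T :=
  InducedCategory.hom_ext (exists_lift (eps T.obj) (eps_surjective _) (𝟙 T.obj)).choose_spec

/-- the equivalence `P(T) ≃ (ext P)(T)` for a β-set `T` -/
def resEquiv (T : BSet.{u}) : P.obj (op T) ≃ {x : P.obj (op (bObj T.obj)) // Cond P x} where
  toFun p := ⟨P.map (epsB T).op p, by
    unfold Cond
    rw [map_map, map_map]
    exact congrArg (fun (g : bObj (W T.obj) ⟶ T) => P.map g.op p) (InducedCategory.hom_ext (q_eps T.obj))⟩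
  invFun x := P.map (secB T).op x.1
  left_inv p := by
    show P.map (secB T).op (P.map (epsB T).op p) = p
    rw [map_map, secB_comp, op_id, FunctorToTypes.map_id_apply]
  right_inv x := by
    apply Subtype.ext
    show P.map (epsB T).op (P.map (secB T).op x.1) = x.1
    rw [map_map]
    have h3 : ((epsB T ≫ secB T : bObj T.obj ⟶ bObj T.obj)) ≫ epsB T
        = (𝟙 (bObj T.obj)) ≫ epsB T := by
      rw [Category.assoc, secB_comp, Category.comp_id, Category.id_comp]
    have := step1 P x.2 (a := epsB T ≫ secB T) (b := 𝟙 (bObj T.obj)) (congrArg InducedCategory.Hom.hom h3)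
    rw [this, op_id, FunctorToTypes.map_id_apply]

/-- the natural isomorphism between `P` and the restriction of its extension -/
def resNatIso : P ≅ (ObjectProperty.ι BSetProp.{u}).op ⋙ extF P :=
  NatIso.ofComponents (fun Top => Equiv.toIso (resEquiv P (unop Top))) (by
    intro T₁op T₂op ψ
    apply ConcreteCategory.hom_ext; intro p
    apply Subtype.ext
    show P.map (epsB (unop T₂op)).op (P.map (ψ.unop).op p)
      = P.map (bHom ⇑(toC ψ.unop)).op (P.map (epsB (unop T₁op)).op p)
    rw [map_map, map_map]
    exact congrArg (fun (g : bObj (unop T₂op).obj ⟶ unop T₁op) => P.map g.op p)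
      (show epsB (unop T₂op) ≫ ψ.unop = bHom ⇑(toC ψ.unop) ≫ epsB (unop T₁op) from
        InducedCategory.hom_ext (bMap_eps (toC ψ.unop)).symm))

section FullFaithful

variable {F F' : CompHaus.{u}ᵒᵖ ⥤ Type u}

lemma fmap_map (F : CompHaus.{u}ᵒᵖ ⥤ Type u) {A B C : CompHaus.{u}} (f : A ⟶ B) (g : B ⟶ C)
    (x : F.obj (op C)) : F.map f.op (F.map g.op x) = F.map (f ≫ g).op x := by
  rw [op_comp, FunctorToTypes.map_comp_apply]

variable (hF' : DescentCond F')
  (γ : (ObjectProperty.ι BSetProp.{u}).op ⋙ F ⟶ (ObjectProperty.ι BSetProp.{u}).op ⋙ F')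

/-- naturality of γ at a β-set morphism, in convenient form -/
lemma gamma_nat {T T' : BSet.{u}} (g : T ⟶ T') (w : F.obj (op T'.obj)) :
    F'.map (toC g).op (γ.app (op T') w) = γ.app (op T) (F.map (toC g).op w) :=
  (ConcreteCategory.congr_hom (γ.naturality g.op) w).symm

include hF' γ in
lemma gamma_desc (X : CompHaus.{u}) (x : F.obj (op X)) :
    F'.map (pullback.fst (eps X) (eps X)).op (γ.app (op (bObj X)) (F.map (eps X).op x))
      = F'.map (pullback.snd (eps X) (eps X)).op (γ.app (op (bObj X)) (F.map (eps X).op x)) := by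
  apply (hF' (W X) (bC (W X)) (eps (W X)) (eps_surjective _)).1
  rw [fmap_map, fmap_map]
  show F'.map (toC (q₁ X)).op _ = F'.map (toC (q₂ X)).op _
  rw [gamma_nat γ (q₁ X), gamma_nat γ (q₂ X)]
  rw [fmap_map, fmap_map]
  exact congrArg (fun (g : bC (W X) ⟶ X) => γ.app (op (bObj (W X))) (F.map g.op x)) (q_eps X)

/-- the component of the extended natural transformation -/
def extApp (X : CompHaus.{u}) (x : F.obj (op X)) : F'.obj (op X) :=
  (((hF' X (bC X) (eps X) (eps_surjective X)).2 _).mp (gamma_desc hF' γ X x)).choose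

lemma extApp_spec (X : CompHaus.{u}) (x : F.obj (op X)) :
    F'.map (eps X).op (extApp hF' γ X x) = γ.app (op (bObj X)) (F.map (eps X).op x) :=
  (((hF' X (bC X) (eps X) (eps_surjective X)).2 _).mp (gamma_desc hF' γ X x)).choose_spec

end FullFaithful

section Extend

variable {F F' : CompHaus.{u}ᵒᵖ ⥤ Type u} (hF' : DescentCond F')
  (γ : (ObjectProperty.ι BSetProp.{u}).op ⋙ F ⟶
    (ObjectProperty.ι BSetProp.{u}).op ⋙ F')

/-- the extension of a natural transformation of restrictions -/
def extNat : F ⟶ F' where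
  app Xop := TypeCat.ofHom fun x => extApp hF' γ (unop Xop) x
  naturality {Yop Xop} ψ := by
    apply ConcreteCategory.hom_ext; intro y
    apply (hF' (unop Xop) (bC (unop Xop)) (eps (unop Xop)) (eps_surjective _)).1
    refine (extApp_spec hF' γ (unop Xop) (F.map ψ y)).trans ?_
    have e1 : F.map (eps (unop Xop)).op (F.map ψ y)
        = F.map (toC (bHom ⇑(ψ.unop))).op (F.map (eps (unop Yop)).op y) :=
      calc F.map (eps (unop Xop)).op (F.map ψ y)
          = F.map (eps (unop Xop) ≫ ψ.unop).op y := fmap_map F (eps (unop Xop)) ψ.unop y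
        _ = F.map (toC (bHom ⇑(ψ.unop)) ≫ eps (unop Yop)).op y :=
            congrArg (fun (g : bC (unop Xop) ⟶ unop Yop) => F.map g.op y) (bMap_eps ψ.unop).symm
        _ = F.map (toC (bHom ⇑(ψ.unop))).op (F.map (eps (unop Yop)).op y) :=
            (fmap_map F (toC (bHom ⇑(ψ.unop))) (eps (unop Yop)) y).symm
    rw [e1, ← gamma_nat γ (bHom ⇑(ψ.unop)), ← extApp_spec hF' γ (unop Yop) y]
    calc F'.map (toC (bHom ⇑(ψ.unop))).op (F'.map (eps (unop Yop)).op (extApp hF' γ (unop Yop) y))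
        = F'.map (toC (bHom ⇑(ψ.unop)) ≫ eps (unop Yop)).op (extApp hF' γ (unop Yop) y) :=
          fmap_map F' (toC (bHom ⇑(ψ.unop))) (eps (unop Yop)) _
      _ = F'.map (eps (unop Xop) ≫ ψ.unop).op (extApp hF' γ (unop Yop) y) :=
          congrArg (fun (g : bC (unop Xop) ⟶ unop Yop) =>
            F'.map g.op (extApp hF' γ (unop Yop) y)) (bMap_eps ψ.unop)
      _ = F'.map (eps (unop Xop)).op (F'.map ψ (extApp hF' γ (unop Yop) y)) :=
          (fmap_map F' (eps (unop Xop)) ψ.unop _).symm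

lemma res_extNat :
    Functor.whiskerLeft (ObjectProperty.ι BSetProp.{u}).op (extNat hF' γ) = γ := by
  apply NatTrans.ext
  funext Top; apply ConcreteCategory.hom_ext; intro x
  obtain ⟨T⟩ := Top
  apply (hF' T.obj (bC T.obj) (eps T.obj) (eps_surjective _)).1
  show F'.map (eps T.obj).op (extApp hF' γ T.obj x)
    = F'.map (eps T.obj).op (γ.app (op T) x)
  rw [extApp_spec]
  exact (gamma_nat γ (epsB T) x).symm

include hF' in
lemma eta_ext (η η' : F ⟶ F')
    (h : Functor.whiskerLeft (ObjectProperty.ι BSetProp.{u}).op η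
      = Functor.whiskerLeft (ObjectProperty.ι BSetProp.{u}).op η') : η = η' := by
  apply NatTrans.ext
  funext Xop; apply ConcreteCategory.hom_ext; intro x
  obtain ⟨X⟩ := Xop
  apply (hF' X (bC X) (eps X) (eps_surjective _)).1
  have n1 := ConcreteCategory.congr_hom (η.naturality (eps X).op) x
  have n2 := ConcreteCategory.congr_hom (η'.naturality (eps X).op) x
  simp only [types_comp_apply] at n1 n2
  show F'.map (eps X).op (η.app (op X) x) = F'.map (eps X).op (η'.app (op X) x)
  rw [← n1, ← n2]
  exact congrArg (fun t => t.app (op (bObj X)) (F.map (eps X).op x)) h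

end Extend
end Stmt14

/-- The restriction functor is an equivalence of categories. -/
theorem stmt14 : res.{u}.IsEquivalence := by
  haveI : res.{u}.Faithful :=
    ⟨fun {FF FF'} {η η'} h => InducedCategory.hom_ext (Stmt14.eta_ext FF'.2 η.hom η'.hom h)⟩
  haveI : res.{u}.Full :=
    ⟨fun {FF FF'} γ => ⟨ObjectProperty.homMk (Stmt14.extNat FF'.2 γ), Stmt14.res_extNat FF'.2 γ⟩⟩
  haveI : res.{u}.EssSurj :=
    ⟨fun P => ⟨⟨Stmt14.extF P, Stmt14.extF_descent P⟩, ⟨(Stmt14.resNatIso P).symm⟩⟩⟩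
  exact {}
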